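/- (Proposition 3, almost sure identity for the randomized Doob martingale.) Let η_0,…,η_J be randomizers satisfying in addition η_j ≤ Y*_j − Z_j + A*_j almost surely for every j = 0,…,J. Then, for the randomized Doob martingale M̃_j = M*_j − η_j, one has the almost sure identity Y*_0 = max_{0 ≤ j ≤ J} ( Z_j − M*_j + η_j ). -/

import Mathlib

open MeasureTheory Finset

/-- **Proposition 3, almost sure identity for the randomized Doob martingale.** Let
`η 0,…,η J` be randomizers (integrable random variables with `E[η j | ℱ J] = 0`) satisfying in
addition `η j ≤ Y j − Z j + A⋆ j` almost surely for every `j = 0,…,J`. Then, for the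
randomized Doob martingale `M̃ j = M⋆ j − η j`, one has the almost sure identity
`Y⋆ 0 = max_{0 ≤ j ≤ J} (Z j − M⋆ j + η j)`. -/
theorem randomized_doob_martingale_almost_sure_identity
    {Ω : Type*} {mΩ : MeasurableSpace Ω} {μ : Measure Ω} [IsProbabilityMeasure μ]
    (J : ℕ) (ℱ : Filtration ℕ mΩ)
    (hF0 : ∀ s : Set Ω, MeasurableSet[ℱ 0] s → μ s = 0 ∨ μ s = 1)
    (Z Y Mstar Astar : ℕ → Ω → ℝ)
    (hZ_adapted : Adapted ℱ Z)
    (hZ_int : ∀ j, Integrable (Z j) μ)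
    (hYJ : ∀ ω, Y J ω = Z J ω)
    (hY : ∀ j, j < J → ∀ ω, Y j ω = max (Z j ω) ((μ[Y (j + 1) | ℱ j]) ω))
    (hMstar : ∀ j ω, Mstar j ω =
      ∑ l ∈ Finset.range j, (Y (l + 1) ω - (μ[Y (l + 1) | ℱ l]) ω))
    (hAstar : ∀ j ω, Astar j ω =
      ∑ l ∈ Finset.range j, (Y l ω - (μ[Y (l + 1) | ℱ l]) ω))
    -- the randomizers
    (η : ℕ → Ω → ℝ)
    (hη_int : ∀ j, Integrable (η j) μ)
    (hη_mean : ∀ j, μ[η j | ℱ J] =ᵐ[μ] 0)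
    (hη_le : ∀ j, j ≤ J → ∀ᵐ ω ∂μ, η j ω ≤ Y j ω - Z j ω + Astar j ω) :
    ∀ᵐ ω ∂μ, Y 0 ω = (Finset.Icc 0 J).sup' (Finset.nonempty_Icc.mpr (Nat.zero_le J))
        (fun j => Z j ω - Mstar j ω + η j ω) := by
  classical
  -- measurability of Z and Y with respect to ℱ J
  have hZmeas : ∀ j, j ≤ J → Measurable[ℱ J] (Z j) := fun j hj =>
    (hZ_adapted j).mono (ℱ.mono hj) le_rfl
  have hYmeas : ∀ j, j ≤ J → Measurable[ℱ J] (Y j) := by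
    have key : ∀ k j, j ≤ J → J - j ≤ k → Measurable[ℱ J] (Y j) := by
      intro k
      induction k with
      | zero =>
        intro j hj hk
        have hjJ : j = J := by omega
        have hYZ : Y j = Z j := by rw [hjJ]; exact funext hYJ
        rw [hYZ]; exact hZmeas j hj
      | succ n ih =>
        intro j hj hk
        rcases hj.lt_or_eq with h | h
        · have hY1 : Measurable[ℱ J] (Y (j + 1)) := ih (j + 1) h (by omega)
          have hYe : Y j = fun ω => max (Z j ω) ((μ[Y (j + 1) | ℱ j]) ω) := funext (hY j h)
          rw [hYe]
          exact (hZmeas j hj).max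
            ((stronglyMeasurable_condExp.mono (ℱ.mono hj)).measurable)
        · have hYZ : Y j = Z j := by rw [h]; exact funext hYJ
          rw [hYZ]; exact hZmeas j hj
    exact fun j hj => key (J - j) j hj le_rfl
  -- pointwise Doob decomposition
  have hDoob : ∀ j ω, Mstar j ω - Astar j ω = Y j ω - Y 0 ω := by
    intro j ω
    rw [hMstar, hAstar, ← Finset.sum_sub_distrib]
    have hterm : ∀ l, (Y (l + 1) ω - (μ[Y (l + 1) | ℱ l]) ω)
        - (Y l ω - (μ[Y (l + 1) | ℱ l]) ω) = Y (l + 1) ω - Y l ω := fun l => by ring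
    simp only [hterm]
    exact Finset.sum_range_sub (fun l => Y l ω) j
  -- the optimal stopping time
  have hex : ∀ ω : Ω, ∃ j, Y j ω = Z j ω := fun ω => ⟨J, hYJ ω⟩
  set τ : Ω → ℕ := fun ω => Nat.find (hex ω) with hτdef
  have hτle : ∀ ω, τ ω ≤ J := fun ω => Nat.find_min' (hex ω) (hYJ ω)
  have hτeq : ∀ ω, Y (τ ω) ω = Z (τ ω) ω := fun ω => Nat.find_spec (hex ω)
  have hτlt : ∀ ω l, l < τ ω → Y l ω ≠ Z l ω := fun ω l hl => Nat.find_min (hex ω) hl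
  -- A⋆ vanishes at τ
  have hAτ : ∀ ω, Astar (τ ω) ω = 0 := by
    intro ω
    rw [hAstar]
    apply Finset.sum_eq_zero
    intro l hl
    have hlτ : l < τ ω := Finset.mem_range.mp hl
    have hlJ : l < J := lt_of_lt_of_le hlτ (hτle ω)
    have hmax := hY l hlJ ω
    have hne := hτlt ω l hlτ
    have hYc : Y l ω = (μ[Y (l + 1) | ℱ l]) ω := by
      rcases le_or_gt ((μ[Y (l + 1) | ℱ l]) ω) (Z l ω) with h | h
      · exact absurd (by rw [hmax, max_eq_left h]) hne
      · rw [hmax, max_eq_right h.le]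
    rw [hYc]; ring
  -- measurability of the level sets of τ
  have hτset : ∀ j, j ≤ J → MeasurableSet[ℱ J] {ω | τ ω = j} := by
    intro j hj
    have heq : {ω | τ ω = j}
        = {ω | Y j ω = Z j ω} ∩ ⋂ (l : ℕ) (_ : l < j), {ω | Y l ω = Z l ω}ᶜ := by
      ext ω
      simp only [Set.mem_setOf_eq, Set.mem_inter_iff, Set.mem_iInter, Set.mem_compl_iff,
        hτdef]
      exact Nat.find_eq_iff (hex ω)
    rw [heq]
    refine (measurableSet_eq_fun (hYmeas j hj) (hZmeas j hj)).inter ?_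
    refine MeasurableSet.iInter fun l => MeasurableSet.iInter fun hl => ?_
    exact (measurableSet_eq_fun (hYmeas l (le_of_lt (lt_of_lt_of_le hl hj)))
      (hZmeas l (le_of_lt (lt_of_lt_of_le hl hj)))).compl
  have hτsetΩ : ∀ j, j ≤ J → MeasurableSet {ω | τ ω = j} :=
    fun j hj => ℱ.le J _ (hτset j hj)
  -- the randomized value at τ
  set g : Ω → ℝ := fun ω => η (τ ω) ω with hgdef
  have hg_eq : g = fun ω => ∑ j ∈ Finset.range (J + 1),
      Set.indicator {ω' | τ ω' = j} (η j) ω := by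
    funext ω
    rw [Finset.sum_eq_single (τ ω)]
    · rw [Set.indicator_of_mem (by exact rfl : ω ∈ {ω' | τ ω' = τ ω})]
    · intro b _ hb
      have hω : ω ∉ {ω' | τ ω' = b} := fun h => hb (Eq.symm h)
      exact Set.indicator_of_notMem hω (η b)
    · intro h
      exact absurd (Finset.mem_range.mpr (Nat.lt_succ_of_le (hτle ω))) h
  have hind_int : ∀ j ∈ Finset.range (J + 1),
      Integrable (Set.indicator {ω' | τ ω' = j} (η j)) μ := fun j hj =>
    (hη_int j).indicator (hτsetΩ j (Nat.lt_succ_iff.mp (Finset.mem_range.mp hj)))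
  have hg_int : Integrable g μ := by
    rw [hg_eq]; exact integrable_finset_sum _ hind_int
  have hg_zero : ∫ ω, g ω ∂μ = 0 := by
    simp only [hg_eq]
    rw [integral_finset_sum _ hind_int]
    apply Finset.sum_eq_zero
    intro j hj
    have hjJ : j ≤ J := Nat.lt_succ_iff.mp (Finset.mem_range.mp hj)
    rw [integral_indicator (hτsetΩ j hjJ),
      ← setIntegral_condExp (ℱ.le J) (hη_int j) (hτset j hjJ)]
    rw [integral_congr_ae (ae_restrict_of_ae (hη_mean j))]
    simp
  -- upper bound almost everywhere
  have hub : ∀ᵐ ω ∂μ, ∀ j, j ≤ J → Z j ω - Mstar j ω + η j ω ≤ Y 0 ω := by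
    rw [ae_all_iff]
    intro j
    by_cases hj : j ≤ J
    · filter_upwards [hη_le j hj] with ω h _
      have hD := hDoob j ω
      linarith
    · filter_upwards with ω h
      exact absurd h hj
  -- lower bound pointwise
  have hlb : ∀ ω, Y 0 ω + g ω ≤ (Finset.Icc 0 J).sup'
      (Finset.nonempty_Icc.mpr (Nat.zero_le J)) (fun j => Z j ω - Mstar j ω + η j ω) := by
    intro ω
    have hmem : τ ω ∈ Finset.Icc 0 J := Finset.mem_Icc.mpr ⟨Nat.zero_le _, hτle ω⟩
    have hsup := Finset.le_sup' (f := fun j => Z j ω - Mstar j ω + η j ω) hmem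
    have hD := hDoob (τ ω) ω
    have h1 := hτeq ω
    have h2 := hAτ ω
    have hgω : g ω = η (τ ω) ω := rfl
    rw [hgω]
    linarith
  -- conclude: -g is nonneg a.e. with zero integral, hence g = 0 a.e.
  have hgle : ∀ᵐ ω ∂μ, (0:ℝ) ≤ -g ω := by
    filter_upwards [hub] with ω h
    have hS : (Finset.Icc 0 J).sup' (Finset.nonempty_Icc.mpr (Nat.zero_le J))
        (fun j => Z j ω - Mstar j ω + η j ω) ≤ Y 0 ω := by
      apply Finset.sup'_le
      intro j hj
      exact h j (Finset.mem_Icc.mp hj).2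
    have := hlb ω
    linarith
  have hgzero : ∀ᵐ ω ∂μ, g ω = 0 := by
    have hneg : ∫ ω, -g ω ∂μ = 0 := by
      rw [integral_neg, hg_zero, neg_zero]
    have := (integral_eq_zero_iff_of_nonneg_ae hgle hg_int.neg).mp hneg
    filter_upwards [this] with ω h
    have : -g ω = 0 := h
    linarith
  filter_upwards [hub, hgzero] with ω h hg0
  have hS : (Finset.Icc 0 J).sup' (Finset.nonempty_Icc.mpr (Nat.zero_le J))
      (fun j => Z j ω - Mstar j ω + η j ω) ≤ Y 0 ω := by
    apply Finset.sup'_le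
    intro j hj
    exact h j (Finset.mem_Icc.mp hj).2
  have hlbω := hlb ω
  rw [hg0] at hlbω
  linarith
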